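/- Let H and K be Hermitian complex n×n matrices and t ∈ ℝ. Define Q(t) := ∫₀ᵗ exp(isH) K exp(−isH) ds. Then (i) the map ε ↦ exp(−it(H + εK)) is differentiable at ε = 0 with derivative −i · exp(−itH) · Q(t), and (ii) Q(t) is Hermitian. -/

import Mathlib

open Matrix NormedSpace

set_option linter.unnecessarySeqFocus false

namespace Stmt14Aux

open intervalIntegral MeasureTheory Filter Topology

section Linfty

attribute [local instance] Matrix.linftyOpNormedRing Matrix.linftyOpNormedAlgebra

variable {n : ℕ}

local notation "M" => Matrix (Fin n) (Fin n) ℂ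

noncomputable abbrev linftyUnif : UniformSpace M := Matrix.linftyOpNormedRing.toUniformSpace

noncomputable abbrev linftyTop : TopologicalSpace M :=
  Matrix.linftyOpNormedRing.toUniformSpace.toTopologicalSpace

attribute [local instance] linftyUnif linftyTop

lemma hasDerivAt_exp_real (X : M) (s : ℝ) :
    HasDerivAt (fun u : ℝ => exp (u • X)) (exp (s • X) * X) s := by
  exact hasDerivAt_exp_smul_const (𝕂 := ℝ) X s

lemma exp_cont : Continuous (exp : M → M) := exp_continuous

/-- the integrand -/
noncomputable def f (H K : M) (ε : ℝ) (s : ℝ) : M :=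
  exp (s • Complex.I • H) * K * exp (s • (-(Complex.I • (H + ε • K))))

lemma f_cont2 (H K : M) : Continuous fun p : ℝ × ℝ => f H K p.1 p.2 := by
  unfold f
  refine Continuous.mul (Continuous.mul ?_ continuous_const) ?_
  · exact exp_cont.comp (continuous_snd.smul continuous_const)
  · exact exp_cont.comp (by fun_prop)

lemma f_cont (H K : M) (ε : ℝ) : Continuous (f H K ε) := by
  unfold f
  refine Continuous.mul (Continuous.mul ?_ continuous_const) ?_
  · exact exp_cont.comp (continuous_id.smul continuous_const)
  · exact exp_cont.comp (continuous_id.smul continuous_const)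

lemma g_deriv (H K : M) (ε : ℝ) (s : ℝ) :
    HasDerivAt (fun s : ℝ =>
        exp (s • Complex.I • H) * exp (s • (-(Complex.I • (H + ε • K)))))
      ((-ε) • (Complex.I • f H K ε s)) s := by
  have h1 := hasDerivAt_exp_real (Complex.I • H) s
  have h2 := hasDerivAt_exp_real (-(Complex.I • (H + ε • K))) s
  have h := h1.mul h2
  convert h using 1
  case e'_4 => rfl
  case e'_5 => rfl
  case e'_8 => rfl
  set u := exp (s • Complex.I • H) with hu
  set w := exp (s • (-(Complex.I • (H + ε • K)))) with hw
  have hBu : Commute (Complex.I • H) u :=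
    (((Commute.refl _).smul_right s).exp_right)
  have hCw : Commute (-(Complex.I • (H + ε • K))) w :=
    (((Commute.refl _).smul_right s).exp_right)
  calc (-ε) • (Complex.I • f H K ε s)
      = u * ((-ε) • (Complex.I • K)) * w := by
        unfold f
        rw [← hu, ← hw]
        simp only [mul_smul_comm, smul_mul_assoc]
    _ = u * ((Complex.I • H) + (-(Complex.I • (H + ε • K)))) * w := by
        congr 2
        module
    _ = u * (Complex.I • H) * w + u * (-(Complex.I • (H + ε • K)) * w) := by
        rw [mul_add, add_mul, mul_assoc u (-(Complex.I • (H + ε • K))) w]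
    _ = u * (Complex.I • H) * w + u * (w * -(Complex.I • (H + ε • K))) := by
        rw [hCw.eq]


lemma exp_neg_mul_exp (X : M) (t : ℝ) : exp (t • (-X)) * exp (t • X) = 1 := by
  rw [← exp_add_of_commute (((Commute.refl X).neg_left).smul_left t |>.smul_right t),
    ← smul_add, neg_add_cancel, smul_zero, exp_zero]

lemma keyIdentity (H K : M) (t ε : ℝ) :
    exp (t • (-(Complex.I • (H + ε • K))))
      = exp (t • (-(Complex.I • H)))
        - ε • (Complex.I •
            (exp (t • (-(Complex.I • H))) * ∫ s in (0:ℝ)..t, f H K ε s)) := by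
  have hint : IntervalIntegrable (fun s => (-ε) • (Complex.I • f H K ε s))
      MeasureTheory.volume 0 t :=
    (((f_cont H K ε).const_smul Complex.I).const_smul (-ε)).intervalIntegrable 0 t
  have hFTC := intervalIntegral.integral_eq_sub_of_hasDerivAt
    (f' := fun s => (-ε) • (Complex.I • f H K ε s)) (fun s _ => g_deriv H K ε s) hint
  rw [intervalIntegral.integral_smul, intervalIntegral.integral_smul] at hFTC
  simp only [zero_smul, exp_zero, one_mul, mul_one] at hFTC
  have key : exp (t • Complex.I • H) * exp (t • (-(Complex.I • (H + ε • K))))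
      = 1 + (-ε) • (Complex.I • ∫ s in (0:ℝ)..t, f H K ε s) := by
    rw [hFTC]; abel
  have huu := exp_neg_mul_exp (Complex.I • H) t
  set uneg := exp (t • (-(Complex.I • H))) with huneg
  set R := ∫ s in (0:ℝ)..t, f H K ε s with hR
  calc exp (t • (-(Complex.I • (H + ε • K))))
      = (uneg * exp (t • Complex.I • H)) * exp (t • (-(Complex.I • (H + ε • K)))) := by
        rw [huu, one_mul]
    _ = uneg * (exp (t • Complex.I • H) * exp (t • (-(Complex.I • (H + ε • K))))) := by
        rw [mul_assoc]
    _ = uneg * (1 + (-ε) • (Complex.I • R)) := by rw [key]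
    _ = uneg - ε • (Complex.I • (uneg * R)) := by
        rw [mul_add, mul_one, mul_smul_comm, mul_smul_comm, neg_smul, ← sub_eq_add_neg]

lemma tendsto_R (H K : M) (t : ℝ) :
    Tendsto (fun ε : ℝ => ∫ s in (0:ℝ)..t, f H K ε s) (𝓝 0)
      (𝓝 (∫ s in (0:ℝ)..t, f H K 0 s)) := by
  obtain ⟨C, hC⟩ := IsCompact.exists_bound_of_continuousOn
    ((isCompact_Icc (a := (-1:ℝ)) (b := 1)).prod (isCompact_uIcc (a := (0:ℝ)) (b := t)))
    (f_cont2 H K).continuousOn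
  apply intervalIntegral.tendsto_integral_filter_of_dominated_convergence (bound := fun _ => C)
  · filter_upwards with ε
    exact ((f_cont H K ε).aestronglyMeasurable).restrict
  · filter_upwards [Icc_mem_nhds (by norm_num : (-1:ℝ) < 0) (by norm_num : (0:ℝ) < 1)] with ε hε
    refine Filter.Eventually.of_forall fun s hs => ?_
    exact hC (ε, s) ⟨hε, Set.Ioc_subset_Icc_self hs⟩
  · exact intervalIntegrable_const
  · refine Filter.Eventually.of_forall fun s _ => ?_
    exact ((f_cont2 H K).comp (continuous_id.prodMk continuous_const)).tendsto 0

/-- The unperturbed integral, `Q(t)`. -/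
noncomputable def QQ (H K : M) (t : ℝ) : M :=
  ∫ s in (0:ℝ)..t, exp (((s:ℂ) * Complex.I) • H) * K * exp ((-((s:ℂ) * Complex.I)) • H)

lemma f_zero (H K : M) (s : ℝ) :
    f H K 0 s
      = exp (((s:ℂ) * Complex.I) • H) * K * exp ((-((s:ℂ) * Complex.I)) • H) := by
  have e1 : s • (Complex.I • H) = ((s:ℂ) * Complex.I) • H := by
    match_scalars <;> (simp [Complex.coe_algebraMap]; try ring)
  have e2 : s • (-(Complex.I • (H + (0:ℝ) • K))) = (-((s:ℂ) * Complex.I)) • H := by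
    rw [zero_smul, add_zero]
    match_scalars <;> (simp [Complex.coe_algebraMap]; try ring)
  unfold f
  rw [e1, e2]

lemma QQ_eq (H K : M) (t : ℝ) : QQ H K t = ∫ s in (0:ℝ)..t, f H K 0 s := by
  unfold QQ
  exact intervalIntegral.integral_congr (fun s _ => (f_zero H K s).symm)

lemma main_tendsto (H K : M) (t : ℝ) :
    Tendsto (slope (fun ε : ℝ => exp ((-(Complex.I * (t : ℂ))) • (H + ε • K))) 0)
      (𝓝[≠] (0:ℝ))
      (𝓝 ((-Complex.I) • (exp ((-(Complex.I * (t : ℂ))) • H) * QQ H K t))) := by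
  have harg : ∀ X : M, (-(Complex.I * (t:ℂ))) • X = t • (-(Complex.I • X)) := by
    intro X
    match_scalars <;> (simp [Complex.coe_algebraMap]; try ring)
  have hten : Tendsto
      (fun ε : ℝ => -(Complex.I •
        (exp (t • (-(Complex.I • H))) * ∫ s in (0:ℝ)..t, f H K ε s))) (𝓝 0)
      (𝓝 (-(Complex.I •
        (exp (t • (-(Complex.I • H))) * ∫ s in (0:ℝ)..t, f H K 0 s)))) := by
    have hcont : Continuous (fun X : M =>
        -(Complex.I • (exp (t • (-(Complex.I • H))) * X))) :=
      ((continuous_const.mul continuous_id).const_smul Complex.I).neg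
    exact (hcont.tendsto _).comp (tendsto_R H K t)
  have htarget : (-Complex.I) • (exp ((-(Complex.I * (t : ℂ))) • H) * QQ H K t)
      = -(Complex.I • (exp (t • (-(Complex.I • H))) * ∫ s in (0:ℝ)..t, f H K 0 s)) := by
    rw [harg H, QQ_eq, neg_smul]
  rw [htarget]
  refine Tendsto.congr' ?_ (hten.mono_left nhdsWithin_le_nhds)
  filter_upwards [self_mem_nhdsWithin] with ε (hε : ε ≠ 0)
  show -(Complex.I • (exp (t • (-(Complex.I • H))) * ∫ s in (0:ℝ)..t, f H K ε s))
      = slope (fun ε : ℝ => exp ((-(Complex.I * (t : ℂ))) • (H + ε • K))) 0 ε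
  rw [slope_def_module]
  simp only [harg]
  rw [keyIdentity H K t ε]
  have h0 : (0:ℝ) • K = 0 := zero_smul _ _
  rw [show H + (0:ℝ) • K = H by rw [h0, add_zero]]
  rw [sub_sub_cancel_left]
  rw [sub_zero]
  have hcancel : ∀ Y : M, ε⁻¹ • -(ε • Complex.I • Y) = -(Complex.I • Y) := fun Y => by
    rw [smul_neg, smul_smul, inv_mul_cancel₀ hε, one_smul]
  rw [hcancel]


/-- The integrand in the statement's form. -/
noncomputable def integrand (H K : M) (s : ℝ) : M :=
  exp (((s:ℂ) * Complex.I) • H) * K * exp ((-((s:ℂ) * Complex.I)) • H)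

lemma integrand_cont (H K : M) : Continuous (integrand H K) := by
  unfold integrand
  have h1 : Continuous fun s : ℝ => ((s:ℂ) * Complex.I) • H :=
    (Complex.continuous_ofReal.mul continuous_const).smul continuous_const
  have h2 : Continuous fun s : ℝ => (-((s:ℂ) * Complex.I)) • H :=
    ((Complex.continuous_ofReal.mul continuous_const).neg).smul continuous_const
  exact ((exp_cont.comp h1).mul continuous_const).mul (exp_cont.comp h2)

noncomputable def entryCLM (i j : Fin n) : Matrix (Fin n) (Fin n) ℂ →L[ℝ] ℂ :=
  LinearMap.toContinuousLinearMap
    { toFun := fun A => A i j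
      map_add' := fun _ _ => rfl
      map_smul' := fun _ _ => rfl }

lemma QQ_entry (H K : M) (t : ℝ) (i j : Fin n) :
    QQ H K t i j = ∫ s in (0:ℝ)..t, integrand H K s i j := by
  have h := (entryCLM i j).intervalIntegral_comp_comm
    ((integrand_cont H K).intervalIntegrable (μ := MeasureTheory.volume) 0 t)
  exact h.symm

end Linfty

section PiNorm

attribute [local instance] Matrix.normedAddCommGroup Matrix.normedSpace

variable {n : ℕ}

noncomputable def entryCLMPi (i j : Fin n) : Matrix (Fin n) (Fin n) ℂ →L[ℝ] ℂ :=
  LinearMap.toContinuousLinearMap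
    { toFun := fun A => A i j
      map_add' := fun _ _ => rfl
      map_smul' := fun _ _ => rfl }

lemma integral_entry_pi (H K : Matrix (Fin n) (Fin n) ℂ) (t : ℝ) (i j : Fin n) :
    (∫ s in (0:ℝ)..t, integrand H K s) i j = ∫ s in (0:ℝ)..t, integrand H K s i j := by
  have hc : Continuous (integrand H K) := integrand_cont H K
  exact (entryCLMPi i j).intervalIntegral_comp_comm
    (hc.intervalIntegrable (μ := MeasureTheory.volume) 0 t) |>.symm

end PiNorm
end Stmt14Aux

open Stmt14Aux

attribute [local instance] Matrix.normedAddCommGroup Matrix.normedSpace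

/-- Transverse Hamiltonian of an isolated system: for the perturbed unitary
`U_ε(t) = e^{−it(H+εK)}`, the derivative at `ε = 0` is `−i e^{−itH} Q(t)` with
`Q(t) = ∫₀ᵗ e^{isH} K e^{−isH} ds`, and `Q(t)` is Hermitian. -/
theorem stmt_14 {n : ℕ} (H K : Matrix (Fin n) (Fin n) ℂ)
    (hH : Hᴴ = H) (hK : Kᴴ = K) (t : ℝ)
    (Q : Matrix (Fin n) (Fin n) ℂ)
    (hQ : Q = ∫ s in (0 : ℝ)..t,
        exp (((s : ℂ) * Complex.I) • H) * K * exp ((-((s : ℂ) * Complex.I)) • H)) :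
    HasDerivAt (fun ε : ℝ => exp ((-(Complex.I * (t : ℂ))) • (H + ε • K)))
        ((-Complex.I) • (exp ((-(Complex.I * (t : ℂ))) • H) * Q)) 0
      ∧ Qᴴ = Q := by
  have hQl : Q = QQ H K t := by
    rw [hQ]
    ext i j
    exact (integral_entry_pi H K t i j).trans (QQ_entry H K t i j).symm
  have hstar : ∀ s : ℝ, (integrand H K s)ᴴ = integrand H K s := by
    intro s
    have c1 : star (-((s:ℂ) * Complex.I)) = (s:ℂ) * Complex.I := by
      simp [Complex.star_def]
    have c2 : star ((s:ℂ) * Complex.I) = -((s:ℂ) * Complex.I) := by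
      simp [Complex.star_def]
    unfold integrand
    erw [conjTranspose_mul, conjTranspose_mul, ← Matrix.exp_conjTranspose,
      ← Matrix.exp_conjTranspose, conjTranspose_smul, conjTranspose_smul, hH, hK, c1, c2,
      mul_assoc]
    rfl
  constructor
  · rw [hQl]; refine hasDerivAt_iff_tendsto_slope.mpr ?_
    exact main_tendsto H K t
  · rw [hQl]
    ext i j
    rw [Matrix.conjTranspose_apply, QQ_entry, QQ_entry]
    have hint : IntervalIntegrable (fun s : ℝ => integrand H K s j i)
        MeasureTheory.volume 0 t :=
      ((integrand_cont H K).matrix_elem j i).intervalIntegrable 0 t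
    have hconj := (Complex.conjCLE.toContinuousLinearMap).intervalIntegral_comp_comm hint
    simp only [ContinuousLinearEquiv.coe_coe, Complex.conjCLE_apply] at hconj
    rw [Complex.star_def, ← hconj]
    refine intervalIntegral.integral_congr fun s _ => ?_
    rw [show (starRingEnd ℂ) (integrand H K s j i) = (integrand H K s)ᴴ i j from rfl, hstar]
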